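/- With the same setup, the second derivative at t=0 of the pulled-back unit normal N(r) = n_r∘(Id+r) satisfies ∂²N[0; ξ₁,ξ₂] = [∇_Γ ξ₂][∇_Γ ξ₁]n + [∇_Γ ξ₁][∇_Γ ξ₂]n − ([∇_Γ ξ₁]n · [∇_Γ ξ₂]n) n. -/

import Mathlib

open Matrix

lemma key' {E : Type*} [NormedAddCommGroup E] [NormedSpace ℝ E]
    (a b c : E) (p q r s : ℝ) :
    iteratedDeriv 2
      (fun t : ℝ => (Real.sqrt (1 + p*t + q*t^2 + r*t^3 + s*t^4))⁻¹ • (a + t • b + t^2 • c)) 0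
    = (2:ℝ) • c - p • b - q • a + (3/4*p^2) • a := by
  set S : ℝ → ℝ := fun t => 1 + p*t + q*t^2 + r*t^3 + s*t^4 with hSdef
  set S' : ℝ → ℝ := fun t => p*1 + q*(2*t^1) + r*(3*t^2) + s*(4*t^3) with hS'def
  have hS' : ∀ t, HasDerivAt S (S' t) t := by
    intro t
    have h := ((((hasDerivAt_const t (1:ℝ)).add ((hasDerivAt_id t).const_mul p)).add
      ((hasDerivAt_pow 2 t).const_mul q)).add
      ((hasDerivAt_pow 3 t).const_mul r)).add
      ((hasDerivAt_pow 4 t).const_mul s)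
    convert h using 1
    · rfl
    · rfl
    · rfl
    · simp [hS'def]
  have hScont : Continuous S := by rw [hSdef]; continuity
  have hS0 : S 0 = 1 := by simp [hSdef]
  have hpos : ∀ᶠ t in nhds (0:ℝ), 0 < S t := by
    have h1 : Set.Ioi (0:ℝ) ∈ nhds (S 0) := by
      rw [hS0]; exact Ioi_mem_nhds one_pos
    exact hScont.continuousAt.preimage_mem_nhds h1
  set w : ℝ → E := fun t => a + t • b + t^2 • c with hwdef
  set w' : ℝ → E := fun t => b + (2*t) • c with hw'def
  have hw : ∀ t, HasDerivAt w (w' t) t := by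
    intro t
    have h := ((hasDerivAt_const t a).add ((hasDerivAt_id t).smul_const b)).add
      ((hasDerivAt_pow 2 t).smul_const c)
    convert h using 1
    · rfl
    · simp [hw'def]
  set F : ℝ → E := fun t => (Real.sqrt (S t))⁻¹ • w t with hFdef
  have hgd : ∀ t, 0 < S t →
      HasDerivAt (fun t => (Real.sqrt (S t))⁻¹)
        (-(1 / (2 * Real.sqrt (S t)) * S' t) / (Real.sqrt (S t))^2) t := by
    intro t ht
    have hsq : Real.sqrt (S t) ≠ 0 := by positivity
    exact ((Real.hasDerivAt_sqrt (ne_of_gt ht)).comp t (hS' t)).inv hsq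
  set G : ℝ → E := fun t =>
      (Real.sqrt (S t))⁻¹ • w' t +
      (-(1 / (2 * Real.sqrt (S t)) * S' t) / (Real.sqrt (S t))^2) • w t with hGdef
  have hF : ∀ t, 0 < S t → HasDerivAt F (G t) t := by
    intro t ht
    exact (hgd t ht).smul (hw t)
  have hderivF : deriv F =ᶠ[nhds 0] G := hpos.mono fun t ht => (hF t ht).deriv
  have hstep1 : iteratedDeriv 2 F 0 = deriv G 0 := by
    rw [iteratedDeriv_succ, iteratedDeriv_one]
    exact hderivF.deriv_eq
  set G₂ : ℝ → E := fun t =>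
      (Real.sqrt (S t))⁻¹ • w' t +
      (-(S' t) / (2 * Real.sqrt (S t) * S t)) • w t with hG₂def
  have hGG₂ : G =ᶠ[nhds 0] G₂ := by
    refine hpos.mono fun t ht => ?_
    have hsq : Real.sqrt (S t) ≠ 0 := by positivity
    have h2 : (Real.sqrt (S t))^2 = S t := Real.sq_sqrt ht.le
    have hc : -(1 / (2 * Real.sqrt (S t)) * S' t) / (Real.sqrt (S t))^2
        = -(S' t) / (2 * Real.sqrt (S t) * S t) := by
      rw [h2]
      field_simp
    rw [hGdef, hG₂def]
    dsimp only
    rw [hc]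
  have hstep2 : deriv G 0 = deriv G₂ 0 := hGG₂.deriv_eq
  have hS0ne : S 0 ≠ 0 := by rw [hS0]; norm_num
  have hS0pos : 0 < S 0 := by rw [hS0]; norm_num
  have hg0 := hgd 0 hS0pos
  have hw'0 : HasDerivAt w' (0 + (2*1:ℝ) • c) 0 :=
    (hasDerivAt_const 0 b).add (((hasDerivAt_id 0).const_mul 2).smul_const c)
  have hS'd : HasDerivAt S'
      (0 + q*(2*((1:ℕ)*(0:ℝ)^0)) + r*(3*(((2:ℕ):ℝ)*0^1)) + s*(4*(((3:ℕ):ℝ)*0^2))) 0 :=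
    (((hasDerivAt_const 0 (p*1)).add (((hasDerivAt_pow 1 0).const_mul 2).const_mul q)).add
      (((hasDerivAt_pow 2 0).const_mul 3).const_mul r)).add
      (((hasDerivAt_pow 3 0).const_mul 4).const_mul s)
  have hsqrt : HasDerivAt (fun t => Real.sqrt (S t)) (1/(2*Real.sqrt (S 0)) * S' 0) 0 :=
    (Real.hasDerivAt_sqrt hS0ne).comp 0 (hS' 0)
  have hden : HasDerivAt (fun t => 2*Real.sqrt (S t)*S t)
      ((2*(1/(2*Real.sqrt (S 0)) * S' 0)) * S 0 + (2*Real.sqrt (S 0)) * S' 0) 0 :=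
    (hsqrt.const_mul 2).mul (hS' 0)
  have hdenne : 2*Real.sqrt (S 0)*S 0 ≠ 0 := by
    rw [hS0, Real.sqrt_one]; norm_num
  have hh₂ : HasDerivAt (fun t => -(S' t) / (2*Real.sqrt (S t)*S t))
      ((-(0 + q*(2*((1:ℕ)*(0:ℝ)^0)) + r*(3*(((2:ℕ):ℝ)*0^1)) + s*(4*(((3:ℕ):ℝ)*0^2)))
          * (2*Real.sqrt (S 0)*S 0)
        - -(S' 0) * ((2*(1/(2*Real.sqrt (S 0)) * S' 0)) * S 0 + (2*Real.sqrt (S 0)) * S' 0))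
        / (2*Real.sqrt (S 0)*S 0)^2) 0 :=
    hS'd.neg.div hden hdenne
  have hG₂0 := (hg0.smul hw'0).add (hh₂.smul (hw 0))
  have hstep3 := hG₂0.deriv
  have hfinal : iteratedDeriv 2 F 0 = (2:ℝ) • c - p • b - q • a + (3/4*p^2) • a := by
    rw [hstep1, hstep2, show deriv G₂ 0 = _ from hstep3]
    have hS'0 : S' 0 = p := by simp [hS'def]
    rw [hS0, hS'0, Real.sqrt_one]
    have hw0 : w 0 = a := by simp [hwdef]
    have hw'00 : w' 0 = b := by simp [hw'def]
    rw [hw0, hw'00]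
    match_scalars <;> ring
  exact hfinal


lemma adj_expand (M : Matrix (Fin 3) (Fin 3) ℝ) (t : ℝ) :
    Matrix.adjugate (1 + t • M)
      = 1 + t • (Matrix.trace M • 1 - M) + (t^2) • Matrix.adjugate M := by
  ext i j
  rw [Matrix.adjugate_fin_three, Matrix.adjugate_fin_three]
  fin_cases i <;> fin_cases j <;>
    simp [Matrix.add_apply, Matrix.smul_apply, Matrix.one_apply, Matrix.sub_apply,
      Matrix.trace_fin_three, smul_eq_mul] <;> ring

lemma omega_expand (M : Matrix (Fin 3) (Fin 3) ℝ) (ν : Fin 3 → ℝ) (t : ℝ) :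
    (Matrix.adjugate (1 + t • M)).transpose.mulVec ν
      = ν + t • (Matrix.trace M • ν - M.transpose.mulVec ν)
          + t^2 • ((Matrix.adjugate M).transpose.mulVec ν) := by
  rw [adj_expand]
  simp [Matrix.transpose_add, Matrix.transpose_smul, Matrix.add_mulVec,
    Matrix.smul_mulVec, Matrix.sub_mulVec, Matrix.transpose_sub,
    Matrix.transpose_one, Matrix.one_mulVec]

private def bbv (M : Matrix (Fin 3) (Fin 3) ℝ) (ν : Fin 3 → ℝ) : Fin 3 → ℝ :=
  Matrix.trace M • ν - M.transpose.mulVec ν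

private def ccv (M : Matrix (Fin 3) (Fin 3) ℝ) (ν : Fin 3 → ℝ) : Fin 3 → ℝ :=
  (Matrix.adjugate M).transpose.mulVec ν


lemma omega_expand' (M : Matrix (Fin 3) (Fin 3) ℝ) (ν : Fin 3 → ℝ) (t : ℝ) :
    (Matrix.adjugate (1 + t • M)).transpose.mulVec ν
      = ν + t • bbv M ν + t^2 • ccv M ν := by
  rw [bbv, ccv, omega_expand]

lemma S_expand (M : Matrix (Fin 3) (Fin 3) ℝ) (ν : Fin 3 → ℝ) (hν : ∑ i, ν i ^ 2 = 1)
    (t : ℝ) :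
    ∑ i, ((Matrix.adjugate (1 + t • M)).transpose.mulVec ν i) ^ 2
      = 1 + (2*(ν ⬝ᵥ bbv M ν))*t + (bbv M ν ⬝ᵥ bbv M ν + 2*(ν ⬝ᵥ ccv M ν))*t^2
          + (2*(bbv M ν ⬝ᵥ ccv M ν))*t^3 + (ccv M ν ⬝ᵥ ccv M ν)*t^4 := by
  have hν' : ν 0 ^ 2 + ν 1 ^ 2 + ν 2 ^ 2 = 1 := by
    simpa [Fin.sum_univ_three] using hν
  rw [omega_expand']
  simp only [Fin.sum_univ_three, dotProduct, Pi.add_apply, Pi.smul_apply, smul_eq_mul]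
  linear_combination hν'

set_option maxHeartbeats 4000000 in
/-- Pointwise second shape derivative of the pulled-back unit normal:
with `Mᵢ = Dξᵢ(x)`, unit normal `ν`, `Nf M t = ω_t/‖ω_t‖`, `ω_t = adjugate(I+tM)ᵀ ν`, and
`Gᵢ = [∇_Γ ξᵢ] = (I − ννᵀ) Mᵢᵀ`, the polarized second derivative at `0` equals
`G₂G₁ν + G₁G₂ν − ⟨G₁ν, G₂ν⟩ ν`. -/
theorem stmt8 (M₁ M₂ : Matrix (Fin 3) (Fin 3) ℝ) (ν : Fin 3 → ℝ)
    (hν : ∑ i, ν i ^ 2 = 1)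
    (Nf : Matrix (Fin 3) (Fin 3) ℝ → ℝ → (Fin 3 → ℝ))
    (hNf : ∀ M t, Nf M t =
      (Real.sqrt (∑ i, ((Matrix.adjugate (1 + t • M)).transpose.mulVec ν i) ^ 2))⁻¹ •
        (Matrix.adjugate (1 + t • M)).transpose.mulVec ν)
    (G₁ G₂ : Matrix (Fin 3) (Fin 3) ℝ)
    (hG₁ : G₁ = (1 - Matrix.vecMulVec ν ν) * M₁.transpose)
    (hG₂ : G₂ = (1 - Matrix.vecMulVec ν ν) * M₂.transpose) :
    (1 / 2 : ℝ) •
        (iteratedDeriv 2 (Nf (M₁ + M₂)) 0 - iteratedDeriv 2 (Nf M₁) 0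
          - iteratedDeriv 2 (Nf M₂) 0)
      = (G₂ * G₁).mulVec ν + (G₁ * G₂).mulVec ν
          - (G₁.mulVec ν ⬝ᵥ G₂.mulVec ν) • ν := by
  have hE : ∀ M : Matrix (Fin 3) (Fin 3) ℝ, iteratedDeriv 2 (Nf M) 0 =
      (2:ℝ) • ccv M ν - (2*(ν ⬝ᵥ bbv M ν)) • bbv M ν
        - (bbv M ν ⬝ᵥ bbv M ν + 2*(ν ⬝ᵥ ccv M ν)) • ν
        + (3/4*(2*(ν ⬝ᵥ bbv M ν))^2) • ν := by
    intro M
    have h1 : Nf M = fun t : ℝ =>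
        (Real.sqrt (1 + (2*(ν ⬝ᵥ bbv M ν))*t + (bbv M ν ⬝ᵥ bbv M ν + 2*(ν ⬝ᵥ ccv M ν))*t^2
          + (2*(bbv M ν ⬝ᵥ ccv M ν))*t^3 + (ccv M ν ⬝ᵥ ccv M ν)*t^4))⁻¹ •
          (ν + t • bbv M ν + t^2 • ccv M ν) := by
      funext t
      rw [hNf, S_expand M ν hν, omega_expand']
    rw [h1, key']
  rw [hE, hE, hE, hG₁, hG₂]
  have hν' : ν 0 ^ 2 + ν 1 ^ 2 + ν 2 ^ 2 = 1 := by
    simpa [Fin.sum_univ_three] using hν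
  funext i
  fin_cases i
  · simp [bbv, ccv, Matrix.mulVec_transpose, Matrix.vecMul, Matrix.adjugate_fin_three,
      Matrix.trace_fin_three, Matrix.mulVec, Matrix.vecMulVec_apply, Matrix.mul_apply,
      Matrix.sub_apply, Matrix.one_apply, Matrix.add_apply, Matrix.transpose_apply,
      dotProduct, Fin.sum_univ_three, Matrix.vecHead, Matrix.vecTail, Function.comp]
    linear_combination ((-3 : ℝ) * M₁ 2 2 * M₂ 2 2 * ν 0 * ν 2 ^ 2 + (1 : ℝ) * M₁ 2 2 * M₂ 2 2 * ν 0 * ν 2 ^ 4 + (3 : ℝ) * M₁ 2 2 * M₂ 2 2 * ν 0 * ν 1 ^ 2 + (3 : ℝ) * M₁ 2 2 * M₂ 2 2 * ν 0 ^ 3 + (-3 : ℝ) * M₁ 2 2 * M₂ 2 1 * ν 0 * ν 1 * ν 2 + (1 : ℝ) * M₁ 2 2 * M₂ 2 1 * ν 0 * ν 1 * ν 2 ^ 3 + (1 : ℝ) * M₁ 2 2 * M₂ 2 0 * ν 2 + (-3 : ℝ) * M₁ 2 2 * M₂ 2 0 * ν 0 ^ 2 * ν 2 + (1 : ℝ)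 * M₁ 2 2 * M₂ 2 0 * ν 0 ^ 2 * ν 2 ^ 3 + (-3 : ℝ) * M₁ 2 2 * M₂ 1 2 * ν 0 * ν 1 * ν 2 + (1 : ℝ) * M₁ 2 2 * M₂ 1 2 * ν 0 * ν 1 * ν 2 ^ 3 + (-1 : ℝ) * M₁ 2 2 * M₂ 1 1 * ν 0 + (1 : ℝ) * M₁ 2 2 * M₂ 1 1 * ν 0 * ν 1 ^ 2 * ν 2 ^ 2 + (3 : ℝ) * M₁ 2 2 * M₂ 1 1 * ν 0 ^ 3 + (1 : ℝ) * M₁ 2 2 * M₂ 1 0 * ν 1 + (-3 : ℝ) * M₁ 2 2 * M₂ 1 0 * ν 0 ^ 2 * ν 1 + (1 : ℝ) * M₁ 2 2 * M₂ 1 0 * ν 0 ^ 2 * ν 1 * ν 2 ^ 2 + (-3 : ℝ) * M₁ 2 2 * M₂ 0 2 * ν 0 ^ 2 * ν 2 + (1 : ℝ) * M₁ 2 2 * M₂ 0 2 * ν 0 ^ 2 * ν 2 ^ 3 + (-3 : ℝ) * M₁ 2 2 * M₂ 0 1 * ν 0 ^ 2 * ν 1 + (1 : ℝ) * M₁ 2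 2 * M₂ 0 1 * ν 0 ^ 2 * ν 1 * ν 2 ^ 2 + (3 : ℝ) * M₁ 2 2 * M₂ 0 0 * ν 0 * ν 1 ^ 2 + (1 : ℝ) * M₁ 2 2 * M₂ 0 0 * ν 0 ^ 3 * ν 2 ^ 2 + (-3 : ℝ) * M₁ 2 1 * M₂ 2 2 * ν 0 * ν 1 * ν 2 + (1 : ℝ) * M₁ 2 1 * M₂ 2 2 * ν 0 * ν 1 * ν 2 ^ 3 + (1 : ℝ) * M₁ 2 1 * M₂ 2 1 * ν 0 * ν 1 ^ 2 * ν 2 ^ 2 + (1 : ℝ) * M₁ 2 1 * M₂ 2 0 * ν 0 ^ 2 * ν 1 * ν 2 ^ 2 + (1 : ℝ) * M₁ 2 1 * M₂ 1 2 * ν 0 + (1 : ℝ) * M₁ 2 1 * M₂ 1 2 * ν 0 * ν 1 ^ 2 * ν 2 ^ 2 + (-3 : ℝ) * M₁ 2 1 * M₂ 1 1 * ν 0 * ν 1 * ν 2 + (1 : ℝ) * M₁ 2 1 * M₂ 1 1 * ν 0 * ν 1 ^ 3 * ν 2 + (1 : ℝ) * M₁ 2 1 * M₂ 1 0 * ν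 0 ^ 2 * ν 1 ^ 2 * ν 2 + (1 : ℝ) * M₁ 2 1 * M₂ 0 2 * ν 0 ^ 2 * ν 1 * ν 2 ^ 2 + (1 : ℝ) * M₁ 2 1 * M₂ 0 1 * ν 0 ^ 2 * ν 1 ^ 2 * ν 2 + (-3 : ℝ) * M₁ 2 1 * M₂ 0 0 * ν 0 * ν 1 * ν 2 + (1 : ℝ) * M₁ 2 1 * M₂ 0 0 * ν 0 ^ 3 * ν 1 * ν 2 + (1 : ℝ) * M₁ 2 0 * M₂ 2 2 * ν 2 + (-3 : ℝ) * M₁ 2 0 * M₂ 2 2 * ν 0 ^ 2 * ν 2 + (1 : ℝ) * M₁ 2 0 * M₂ 2 2 * ν 0 ^ 2 * ν 2 ^ 3 + (1 : ℝ) * M₁ 2 0 * M₂ 2 1 * ν 0 ^ 2 * ν 1 * ν 2 ^ 2 + (1 : ℝ) * M₁ 2 0 * M₂ 2 0 * ν 0 ^ 3 * ν 2 ^ 2 + (1 : ℝ) * M₁ 2 0 * M₂ 1 2 * ν 0 ^ 2 * ν 1 * ν 2 ^ 2 + (1 : ℝ) * M₁ 2 0 * M₂ 1 1 * ν 2 +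 (-3 : ℝ) * M₁ 2 0 * M₂ 1 1 * ν 0 ^ 2 * ν 2 + (1 : ℝ) * M₁ 2 0 * M₂ 1 1 * ν 0 ^ 2 * ν 1 ^ 2 * ν 2 + (1 : ℝ) * M₁ 2 0 * M₂ 1 0 * ν 0 ^ 3 * ν 1 * ν 2 + (1 : ℝ) * M₁ 2 0 * M₂ 0 2 * ν 0 + (1 : ℝ) * M₁ 2 0 * M₂ 0 2 * ν 0 ^ 3 * ν 2 ^ 2 + (1 : ℝ) * M₁ 2 0 * M₂ 0 1 * ν 0 ^ 3 * ν 1 * ν 2 + (1 : ℝ) * M₁ 2 0 * M₂ 0 0 * ν 2 + (-3 : ℝ) * M₁ 2 0 * M₂ 0 0 * ν 0 ^ 2 * ν 2 + (1 : ℝ) * M₁ 2 0 * M₂ 0 0 * ν 0 ^ 4 * ν 2 + (-3 : ℝ) * M₁ 1 2 * M₂ 2 2 * ν 0 * ν 1 * ν 2 + (1 : ℝ) * M₁ 1 2 * M₂ 2 2 * ν 0 * ν 1 * ν 2 ^ 3 + (1 : ℝ) * M₁ 1 2 * M₂ 2 1 * ν 0 + (1 : ℝ) * M₁ 1 2 *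 M₂ 2 1 * ν 0 * ν 1 ^ 2 * ν 2 ^ 2 + (1 : ℝ) * M₁ 1 2 * M₂ 2 0 * ν 0 ^ 2 * ν 1 * ν 2 ^ 2 + (1 : ℝ) * M₁ 1 2 * M₂ 1 2 * ν 0 * ν 1 ^ 2 * ν 2 ^ 2 + (-3 : ℝ) * M₁ 1 2 * M₂ 1 1 * ν 0 * ν 1 * ν 2 + (1 : ℝ) * M₁ 1 2 * M₂ 1 1 * ν 0 * ν 1 ^ 3 * ν 2 + (1 : ℝ) * M₁ 1 2 * M₂ 1 0 * ν 0 ^ 2 * ν 1 ^ 2 * ν 2 + (1 : ℝ) * M₁ 1 2 * M₂ 0 2 * ν 0 ^ 2 * ν 1 * ν 2 ^ 2 + (1 : ℝ) * M₁ 1 2 * M₂ 0 1 * ν 0 ^ 2 * ν 1 ^ 2 * ν 2 + (-3 : ℝ) * M₁ 1 2 * M₂ 0 0 * ν 0 * ν 1 * ν 2 + (1 : ℝ) * M₁ 1 2 * M₂ 0 0 * ν 0 ^ 3 * ν 1 * ν 2 + (-1 : ℝ) * M₁ 1 1 * M₂ 2 2 * ν 0 + (1 : ℝ) * M₁ 1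 1 * M₂ 2 2 * ν 0 * ν 1 ^ 2 * ν 2 ^ 2 + (3 : ℝ) * M₁ 1 1 * M₂ 2 2 * ν 0 ^ 3 + (-3 : ℝ) * M₁ 1 1 * M₂ 2 1 * ν 0 * ν 1 * ν 2 + (1 : ℝ) * M₁ 1 1 * M₂ 2 1 * ν 0 * ν 1 ^ 3 * ν 2 + (1 : ℝ) * M₁ 1 1 * M₂ 2 0 * ν 2 + (-3 : ℝ) * M₁ 1 1 * M₂ 2 0 * ν 0 ^ 2 * ν 2 + (1 : ℝ) * M₁ 1 1 * M₂ 2 0 * ν 0 ^ 2 * ν 1 ^ 2 * ν 2 + (-3 : ℝ) * M₁ 1 1 * M₂ 1 2 * ν 0 * ν 1 * ν 2 + (1 : ℝ) * M₁ 1 1 * M₂ 1 2 * ν 0 * ν 1 ^ 3 * ν 2 + (3 : ℝ) * M₁ 1 1 * M₂ 1 1 * ν 0 * ν 2 ^ 2 + (-3 : ℝ) * M₁ 1 1 * M₂ 1 1 * ν 0 * ν 1 ^ 2 + (1 : ℝ) * M₁ 1 1 * M₂ 1 1 * ν 0 * ν 1 ^ 4 + (3 : ℝ) * M₁ 1 1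 * M₂ 1 1 * ν 0 ^ 3 + (1 : ℝ) * M₁ 1 1 * M₂ 1 0 * ν 1 + (-3 : ℝ) * M₁ 1 1 * M₂ 1 0 * ν 0 ^ 2 * ν 1 + (1 : ℝ) * M₁ 1 1 * M₂ 1 0 * ν 0 ^ 2 * ν 1 ^ 3 + (-3 : ℝ) * M₁ 1 1 * M₂ 0 2 * ν 0 ^ 2 * ν 2 + (1 : ℝ) * M₁ 1 1 * M₂ 0 2 * ν 0 ^ 2 * ν 1 ^ 2 * ν 2 + (-3 : ℝ) * M₁ 1 1 * M₂ 0 1 * ν 0 ^ 2 * ν 1 + (1 : ℝ) * M₁ 1 1 * M₂ 0 1 * ν 0 ^ 2 * ν 1 ^ 3 + (3 : ℝ) * M₁ 1 1 * M₂ 0 0 * ν 0 * ν 2 ^ 2 + (1 : ℝ) * M₁ 1 1 * M₂ 0 0 * ν 0 ^ 3 * ν 1 ^ 2 + (1 : ℝ) * M₁ 1 0 * M₂ 2 2 * ν 1 + (-3 : ℝ) * M₁ 1 0 * M₂ 2 2 * ν 0 ^ 2 * ν 1 + (1 : ℝ) * M₁ 1 0 * M₂ 2 2 * ν 0 ^ 2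 * ν 1 * ν 2 ^ 2 + (1 : ℝ) * M₁ 1 0 * M₂ 2 1 * ν 0 ^ 2 * ν 1 ^ 2 * ν 2 + (1 : ℝ) * M₁ 1 0 * M₂ 2 0 * ν 0 ^ 3 * ν 1 * ν 2 + (1 : ℝ) * M₁ 1 0 * M₂ 1 2 * ν 0 ^ 2 * ν 1 ^ 2 * ν 2 + (1 : ℝ) * M₁ 1 0 * M₂ 1 1 * ν 1 + (-3 : ℝ) * M₁ 1 0 * M₂ 1 1 * ν 0 ^ 2 * ν 1 + (1 : ℝ) * M₁ 1 0 * M₂ 1 1 * ν 0 ^ 2 * ν 1 ^ 3 + (1 : ℝ) * M₁ 1 0 * M₂ 1 0 * ν 0 ^ 3 * ν 1 ^ 2 + (1 : ℝ) * M₁ 1 0 * M₂ 0 2 * ν 0 ^ 3 * ν 1 * ν 2 + (1 : ℝ) * M₁ 1 0 * M₂ 0 1 * ν 0 + (1 : ℝ) * M₁ 1 0 * M₂ 0 1 * ν 0 ^ 3 * ν 1 ^ 2 + (1 : ℝ) * M₁ 1 0 * M₂ 0 0 * ν 1 + (-3 : ℝ) * M₁ 1 0 * M₂ 0 0 * ν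 0 ^ 2 * ν 1 + (1 : ℝ) * M₁ 1 0 * M₂ 0 0 * ν 0 ^ 4 * ν 1 + (-3 : ℝ) * M₁ 0 2 * M₂ 2 2 * ν 0 ^ 2 * ν 2 + (1 : ℝ) * M₁ 0 2 * M₂ 2 2 * ν 0 ^ 2 * ν 2 ^ 3 + (1 : ℝ) * M₁ 0 2 * M₂ 2 1 * ν 0 ^ 2 * ν 1 * ν 2 ^ 2 + (1 : ℝ) * M₁ 0 2 * M₂ 2 0 * ν 0 + (1 : ℝ) * M₁ 0 2 * M₂ 2 0 * ν 0 ^ 3 * ν 2 ^ 2 + (1 : ℝ) * M₁ 0 2 * M₂ 1 2 * ν 0 ^ 2 * ν 1 * ν 2 ^ 2 + (-3 : ℝ) * M₁ 0 2 * M₂ 1 1 * ν 0 ^ 2 * ν 2 + (1 : ℝ) * M₁ 0 2 * M₂ 1 1 * ν 0 ^ 2 * ν 1 ^ 2 * ν 2 + (1 : ℝ) * M₁ 0 2 * M₂ 1 0 * ν 0 ^ 3 * ν 1 * ν 2 + (1 : ℝ) * M₁ 0 2 * M₂ 0 2 * ν 0 ^ 3 * ν 2 ^ 2 + (1 : ℝ)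 * M₁ 0 2 * M₂ 0 1 * ν 0 ^ 3 * ν 1 * ν 2 + (-3 : ℝ) * M₁ 0 2 * M₂ 0 0 * ν 0 ^ 2 * ν 2 + (1 : ℝ) * M₁ 0 2 * M₂ 0 0 * ν 0 ^ 4 * ν 2 + (-3 : ℝ) * M₁ 0 1 * M₂ 2 2 * ν 0 ^ 2 * ν 1 + (1 : ℝ) * M₁ 0 1 * M₂ 2 2 * ν 0 ^ 2 * ν 1 * ν 2 ^ 2 + (1 : ℝ) * M₁ 0 1 * M₂ 2 1 * ν 0 ^ 2 * ν 1 ^ 2 * ν 2 + (1 : ℝ) * M₁ 0 1 * M₂ 2 0 * ν 0 ^ 3 * ν 1 * ν 2 + (1 : ℝ) * M₁ 0 1 * M₂ 1 2 * ν 0 ^ 2 * ν 1 ^ 2 * ν 2 + (-3 : ℝ) * M₁ 0 1 * M₂ 1 1 * ν 0 ^ 2 * ν 1 + (1 : ℝ) * M₁ 0 1 * M₂ 1 1 * ν 0 ^ 2 * ν 1 ^ 3 + (1 : ℝ) * M₁ 0 1 * M₂ 1 0 * ν 0 + (1 : ℝ) * M₁ 0 1 * M₂ 1 0 * ν 0 ^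 3 * ν 1 ^ 2 + (1 : ℝ) * M₁ 0 1 * M₂ 0 2 * ν 0 ^ 3 * ν 1 * ν 2 + (1 : ℝ) * M₁ 0 1 * M₂ 0 1 * ν 0 ^ 3 * ν 1 ^ 2 + (-3 : ℝ) * M₁ 0 1 * M₂ 0 0 * ν 0 ^ 2 * ν 1 + (1 : ℝ) * M₁ 0 1 * M₂ 0 0 * ν 0 ^ 4 * ν 1 + (3 : ℝ) * M₁ 0 0 * M₂ 2 2 * ν 0 * ν 1 ^ 2 + (1 : ℝ) * M₁ 0 0 * M₂ 2 2 * ν 0 ^ 3 * ν 2 ^ 2 + (-3 : ℝ) * M₁ 0 0 * M₂ 2 1 * ν 0 * ν 1 * ν 2 + (1 : ℝ) * M₁ 0 0 * M₂ 2 1 * ν 0 ^ 3 * ν 1 * ν 2 + (1 : ℝ) * M₁ 0 0 * M₂ 2 0 * ν 2 + (-3 : ℝ) * M₁ 0 0 * M₂ 2 0 * ν 0 ^ 2 * ν 2 + (1 : ℝ) * M₁ 0 0 * M₂ 2 0 * ν 0 ^ 4 * ν 2 + (-3 : ℝ) * M₁ 0 0 * M₂ 1 2 * ν 0 * ν 1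 * ν 2 + (1 : ℝ) * M₁ 0 0 * M₂ 1 2 * ν 0 ^ 3 * ν 1 * ν 2 + (3 : ℝ) * M₁ 0 0 * M₂ 1 1 * ν 0 * ν 2 ^ 2 + (1 : ℝ) * M₁ 0 0 * M₂ 1 1 * ν 0 ^ 3 * ν 1 ^ 2 + (1 : ℝ) * M₁ 0 0 * M₂ 1 0 * ν 1 + (-3 : ℝ) * M₁ 0 0 * M₂ 1 0 * ν 0 ^ 2 * ν 1 + (1 : ℝ) * M₁ 0 0 * M₂ 1 0 * ν 0 ^ 4 * ν 1 + (-3 : ℝ) * M₁ 0 0 * M₂ 0 2 * ν 0 ^ 2 * ν 2 + (1 : ℝ) * M₁ 0 0 * M₂ 0 2 * ν 0 ^ 4 * ν 2 + (-3 : ℝ) * M₁ 0 0 * M₂ 0 1 * ν 0 ^ 2 * ν 1 + (1 : ℝ) * M₁ 0 0 * M₂ 0 1 * ν 0 ^ 4 * ν 1 + (2 : ℝ) * M₁ 0 0 * M₂ 0 0 * ν 0 + (3 : ℝ) * M₁ 0 0 * M₂ 0 0 * ν 0 * ν 2 ^ 2 + (3 : ℝ) * M₁ 0 0 * M₂ 0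 0 * ν 0 * ν 1 ^ 2 + (-3 : ℝ) * M₁ 0 0 * M₂ 0 0 * ν 0 ^ 3 + (1 : ℝ) * M₁ 0 0 * M₂ 0 0 * ν 0 ^ 5) * hν'
  · simp [bbv, ccv, Matrix.mulVec_transpose, Matrix.vecMul, Matrix.adjugate_fin_three,
      Matrix.trace_fin_three, Matrix.mulVec, Matrix.vecMulVec_apply, Matrix.mul_apply,
      Matrix.sub_apply, Matrix.one_apply, Matrix.add_apply, Matrix.transpose_apply,
      dotProduct, Fin.sum_univ_three, Matrix.vecHead, Matrix.vecTail, Function.comp]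
    linear_combination ((-3 : ℝ) * M₁ 2 2 * M₂ 2 2 * ν 1 * ν 2 ^ 2 + (1 : ℝ) * M₁ 2 2 * M₂ 2 2 * ν 1 * ν 2 ^ 4 + (3 : ℝ) * M₁ 2 2 * M₂ 2 2 * ν 1 ^ 3 + (3 : ℝ) * M₁ 2 2 * M₂ 2 2 * ν 0 ^ 2 * ν 1 + (1 : ℝ) * M₁ 2 2 * M₂ 2 1 * ν 2 + (-3 : ℝ) * M₁ 2 2 * M₂ 2 1 * ν 1 ^ 2 * ν 2 + (1 : ℝ) * M₁ 2 2 * M₂ 2 1 * ν 1 ^ 2 * ν 2 ^ 3 + (-3 : ℝ) * M₁ 2 2 * M₂ 2 0 * ν 0 * ν 1 * ν 2 + (1 : ℝ) * M₁ 2 2 * M₂ 2 0 * ν 0 * ν 1 * ν 2 ^ 3 + (-3 : ℝ) * M₁ 2 2 * M₂ 1 2 * ν 1 ^ 2 * ν 2 + (1 : ℝ) * M₁ 2 2 * M₂ 1 2 * ν 1 ^ 2 * ν 2 ^ 3 + (1 : ℝ) * M₁ 2 2 * M₂ 1 1 * ν 1 ^ 3 * ν 2 ^ 2 + (3 : ℝ)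 * M₁ 2 2 * M₂ 1 1 * ν 0 ^ 2 * ν 1 + (-3 : ℝ) * M₁ 2 2 * M₂ 1 0 * ν 0 * ν 1 ^ 2 + (1 : ℝ) * M₁ 2 2 * M₂ 1 0 * ν 0 * ν 1 ^ 2 * ν 2 ^ 2 + (-3 : ℝ) * M₁ 2 2 * M₂ 0 2 * ν 0 * ν 1 * ν 2 + (1 : ℝ) * M₁ 2 2 * M₂ 0 2 * ν 0 * ν 1 * ν 2 ^ 3 + (1 : ℝ) * M₁ 2 2 * M₂ 0 1 * ν 0 + (-3 : ℝ) * M₁ 2 2 * M₂ 0 1 * ν 0 * ν 1 ^ 2 + (1 : ℝ) * M₁ 2 2 * M₂ 0 1 * ν 0 * ν 1 ^ 2 * ν 2 ^ 2 + (-1 : ℝ) * M₁ 2 2 * M₂ 0 0 * ν 1 + (3 : ℝ) * M₁ 2 2 * M₂ 0 0 * ν 1 ^ 3 + (1 : ℝ) * M₁ 2 2 * M₂ 0 0 * ν 0 ^ 2 * ν 1 * ν 2 ^ 2 + (1 : ℝ) * M₁ 2 1 * M₂ 2 2 * ν 2 + (-3 : ℝ) * M₁ 2 1 * M₂ 2 2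 * ν 1 ^ 2 * ν 2 + (1 : ℝ) * M₁ 2 1 * M₂ 2 2 * ν 1 ^ 2 * ν 2 ^ 3 + (1 : ℝ) * M₁ 2 1 * M₂ 2 1 * ν 1 ^ 3 * ν 2 ^ 2 + (1 : ℝ) * M₁ 2 1 * M₂ 2 0 * ν 0 * ν 1 ^ 2 * ν 2 ^ 2 + (1 : ℝ) * M₁ 2 1 * M₂ 1 2 * ν 1 + (1 : ℝ) * M₁ 2 1 * M₂ 1 2 * ν 1 ^ 3 * ν 2 ^ 2 + (1 : ℝ) * M₁ 2 1 * M₂ 1 1 * ν 2 + (-3 : ℝ) * M₁ 2 1 * M₂ 1 1 * ν 1 ^ 2 * ν 2 + (1 : ℝ) * M₁ 2 1 * M₂ 1 1 * ν 1 ^ 4 * ν 2 + (1 : ℝ) * M₁ 2 1 * M₂ 1 0 * ν 0 * ν 1 ^ 3 * ν 2 + (1 : ℝ) * M₁ 2 1 * M₂ 0 2 * ν 0 * ν 1 ^ 2 * ν 2 ^ 2 + (1 : ℝ) * M₁ 2 1 * M₂ 0 1 * ν 0 * ν 1 ^ 3 * ν 2 + (1 : ℝ) * M₁ 2 1 * M₂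 0 0 * ν 2 + (-3 : ℝ) * M₁ 2 1 * M₂ 0 0 * ν 1 ^ 2 * ν 2 + (1 : ℝ) * M₁ 2 1 * M₂ 0 0 * ν 0 ^ 2 * ν 1 ^ 2 * ν 2 + (-3 : ℝ) * M₁ 2 0 * M₂ 2 2 * ν 0 * ν 1 * ν 2 + (1 : ℝ) * M₁ 2 0 * M₂ 2 2 * ν 0 * ν 1 * ν 2 ^ 3 + (1 : ℝ) * M₁ 2 0 * M₂ 2 1 * ν 0 * ν 1 ^ 2 * ν 2 ^ 2 + (1 : ℝ) * M₁ 2 0 * M₂ 2 0 * ν 0 ^ 2 * ν 1 * ν 2 ^ 2 + (1 : ℝ) * M₁ 2 0 * M₂ 1 2 * ν 0 * ν 1 ^ 2 * ν 2 ^ 2 + (-3 : ℝ) * M₁ 2 0 * M₂ 1 1 * ν 0 * ν 1 * ν 2 + (1 : ℝ) * M₁ 2 0 * M₂ 1 1 * ν 0 * ν 1 ^ 3 * ν 2 + (1 : ℝ) * M₁ 2 0 * M₂ 1 0 * ν 0 ^ 2 * ν 1 ^ 2 * ν 2 + (1 : ℝ) * M₁ 2 0 * M₂ 0 2 * ν 1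 + (1 : ℝ) * M₁ 2 0 * M₂ 0 2 * ν 0 ^ 2 * ν 1 * ν 2 ^ 2 + (1 : ℝ) * M₁ 2 0 * M₂ 0 1 * ν 0 ^ 2 * ν 1 ^ 2 * ν 2 + (-3 : ℝ) * M₁ 2 0 * M₂ 0 0 * ν 0 * ν 1 * ν 2 + (1 : ℝ) * M₁ 2 0 * M₂ 0 0 * ν 0 ^ 3 * ν 1 * ν 2 + (-3 : ℝ) * M₁ 1 2 * M₂ 2 2 * ν 1 ^ 2 * ν 2 + (1 : ℝ) * M₁ 1 2 * M₂ 2 2 * ν 1 ^ 2 * ν 2 ^ 3 + (1 : ℝ) * M₁ 1 2 * M₂ 2 1 * ν 1 + (1 : ℝ) * M₁ 1 2 * M₂ 2 1 * ν 1 ^ 3 * ν 2 ^ 2 + (1 : ℝ) * M₁ 1 2 * M₂ 2 0 * ν 0 * ν 1 ^ 2 * ν 2 ^ 2 + (1 : ℝ) * M₁ 1 2 * M₂ 1 2 * ν 1 ^ 3 * ν 2 ^ 2 + (-3 : ℝ) * M₁ 1 2 * M₂ 1 1 * ν 1 ^ 2 * ν 2 + (1 : ℝ) * M₁ 1 2 *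 M₂ 1 1 * ν 1 ^ 4 * ν 2 + (1 : ℝ) * M₁ 1 2 * M₂ 1 0 * ν 0 * ν 1 ^ 3 * ν 2 + (1 : ℝ) * M₁ 1 2 * M₂ 0 2 * ν 0 * ν 1 ^ 2 * ν 2 ^ 2 + (1 : ℝ) * M₁ 1 2 * M₂ 0 1 * ν 0 * ν 1 ^ 3 * ν 2 + (-3 : ℝ) * M₁ 1 2 * M₂ 0 0 * ν 1 ^ 2 * ν 2 + (1 : ℝ) * M₁ 1 2 * M₂ 0 0 * ν 0 ^ 2 * ν 1 ^ 2 * ν 2 + (1 : ℝ) * M₁ 1 1 * M₂ 2 2 * ν 1 ^ 3 * ν 2 ^ 2 + (3 : ℝ) * M₁ 1 1 * M₂ 2 2 * ν 0 ^ 2 * ν 1 + (1 : ℝ) * M₁ 1 1 * M₂ 2 1 * ν 2 + (-3 : ℝ) * M₁ 1 1 * M₂ 2 1 * ν 1 ^ 2 * ν 2 + (1 : ℝ) * M₁ 1 1 * M₂ 2 1 * ν 1 ^ 4 * ν 2 + (-3 : ℝ) * M₁ 1 1 * M₂ 2 0 * ν 0 * ν 1 * ν 2 + (1 : ℝ) *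 M₁ 1 1 * M₂ 2 0 * ν 0 * ν 1 ^ 3 * ν 2 + (-3 : ℝ) * M₁ 1 1 * M₂ 1 2 * ν 1 ^ 2 * ν 2 + (1 : ℝ) * M₁ 1 1 * M₂ 1 2 * ν 1 ^ 4 * ν 2 + (2 : ℝ) * M₁ 1 1 * M₂ 1 1 * ν 1 + (3 : ℝ) * M₁ 1 1 * M₂ 1 1 * ν 1 * ν 2 ^ 2 + (-3 : ℝ) * M₁ 1 1 * M₂ 1 1 * ν 1 ^ 3 + (1 : ℝ) * M₁ 1 1 * M₂ 1 1 * ν 1 ^ 5 + (3 : ℝ) * M₁ 1 1 * M₂ 1 1 * ν 0 ^ 2 * ν 1 + (-3 : ℝ) * M₁ 1 1 * M₂ 1 0 * ν 0 * ν 1 ^ 2 + (1 : ℝ) * M₁ 1 1 * M₂ 1 0 * ν 0 * ν 1 ^ 4 + (-3 : ℝ) * M₁ 1 1 * M₂ 0 2 * ν 0 * ν 1 * ν 2 + (1 : ℝ) * M₁ 1 1 * M₂ 0 2 * ν 0 * ν 1 ^ 3 * ν 2 + (1 : ℝ) * M₁ 1 1 * M₂ 0 1 * ν 0 + (-3 :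 ℝ) * M₁ 1 1 * M₂ 0 1 * ν 0 * ν 1 ^ 2 + (1 : ℝ) * M₁ 1 1 * M₂ 0 1 * ν 0 * ν 1 ^ 4 + (3 : ℝ) * M₁ 1 1 * M₂ 0 0 * ν 1 * ν 2 ^ 2 + (1 : ℝ) * M₁ 1 1 * M₂ 0 0 * ν 0 ^ 2 * ν 1 ^ 3 + (-3 : ℝ) * M₁ 1 0 * M₂ 2 2 * ν 0 * ν 1 ^ 2 + (1 : ℝ) * M₁ 1 0 * M₂ 2 2 * ν 0 * ν 1 ^ 2 * ν 2 ^ 2 + (1 : ℝ) * M₁ 1 0 * M₂ 2 1 * ν 0 * ν 1 ^ 3 * ν 2 + (1 : ℝ) * M₁ 1 0 * M₂ 2 0 * ν 0 ^ 2 * ν 1 ^ 2 * ν 2 + (1 : ℝ) * M₁ 1 0 * M₂ 1 2 * ν 0 * ν 1 ^ 3 * ν 2 + (-3 : ℝ) * M₁ 1 0 * M₂ 1 1 * ν 0 * ν 1 ^ 2 + (1 : ℝ) * M₁ 1 0 * M₂ 1 1 * ν 0 * ν 1 ^ 4 + (1 : ℝ) * M₁ 1 0 * M₂ 1 0 * ν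 0 ^ 2 * ν 1 ^ 3 + (1 : ℝ) * M₁ 1 0 * M₂ 0 2 * ν 0 ^ 2 * ν 1 ^ 2 * ν 2 + (1 : ℝ) * M₁ 1 0 * M₂ 0 1 * ν 1 + (1 : ℝ) * M₁ 1 0 * M₂ 0 1 * ν 0 ^ 2 * ν 1 ^ 3 + (-3 : ℝ) * M₁ 1 0 * M₂ 0 0 * ν 0 * ν 1 ^ 2 + (1 : ℝ) * M₁ 1 0 * M₂ 0 0 * ν 0 ^ 3 * ν 1 ^ 2 + (-3 : ℝ) * M₁ 0 2 * M₂ 2 2 * ν 0 * ν 1 * ν 2 + (1 : ℝ) * M₁ 0 2 * M₂ 2 2 * ν 0 * ν 1 * ν 2 ^ 3 + (1 : ℝ) * M₁ 0 2 * M₂ 2 1 * ν 0 * ν 1 ^ 2 * ν 2 ^ 2 + (1 : ℝ) * M₁ 0 2 * M₂ 2 0 * ν 1 + (1 : ℝ) * M₁ 0 2 * M₂ 2 0 * ν 0 ^ 2 * ν 1 * ν 2 ^ 2 + (1 : ℝ) * M₁ 0 2 * M₂ 1 2 * ν 0 * ν 1 ^ 2 * ν 2 ^ 2 + (-3 : ℝ)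 * M₁ 0 2 * M₂ 1 1 * ν 0 * ν 1 * ν 2 + (1 : ℝ) * M₁ 0 2 * M₂ 1 1 * ν 0 * ν 1 ^ 3 * ν 2 + (1 : ℝ) * M₁ 0 2 * M₂ 1 0 * ν 0 ^ 2 * ν 1 ^ 2 * ν 2 + (1 : ℝ) * M₁ 0 2 * M₂ 0 2 * ν 0 ^ 2 * ν 1 * ν 2 ^ 2 + (1 : ℝ) * M₁ 0 2 * M₂ 0 1 * ν 0 ^ 2 * ν 1 ^ 2 * ν 2 + (-3 : ℝ) * M₁ 0 2 * M₂ 0 0 * ν 0 * ν 1 * ν 2 + (1 : ℝ) * M₁ 0 2 * M₂ 0 0 * ν 0 ^ 3 * ν 1 * ν 2 + (1 : ℝ) * M₁ 0 1 * M₂ 2 2 * ν 0 + (-3 : ℝ) * M₁ 0 1 * M₂ 2 2 * ν 0 * ν 1 ^ 2 + (1 : ℝ) * M₁ 0 1 * M₂ 2 2 * ν 0 * ν 1 ^ 2 * ν 2 ^ 2 + (1 : ℝ) * M₁ 0 1 * M₂ 2 1 * ν 0 * ν 1 ^ 3 * ν 2 + (1 : ℝ) * M₁ 0 1 * M₂ 2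 0 * ν 0 ^ 2 * ν 1 ^ 2 * ν 2 + (1 : ℝ) * M₁ 0 1 * M₂ 1 2 * ν 0 * ν 1 ^ 3 * ν 2 + (1 : ℝ) * M₁ 0 1 * M₂ 1 1 * ν 0 + (-3 : ℝ) * M₁ 0 1 * M₂ 1 1 * ν 0 * ν 1 ^ 2 + (1 : ℝ) * M₁ 0 1 * M₂ 1 1 * ν 0 * ν 1 ^ 4 + (1 : ℝ) * M₁ 0 1 * M₂ 1 0 * ν 1 + (1 : ℝ) * M₁ 0 1 * M₂ 1 0 * ν 0 ^ 2 * ν 1 ^ 3 + (1 : ℝ) * M₁ 0 1 * M₂ 0 2 * ν 0 ^ 2 * ν 1 ^ 2 * ν 2 + (1 : ℝ) * M₁ 0 1 * M₂ 0 1 * ν 0 ^ 2 * ν 1 ^ 3 + (1 : ℝ) * M₁ 0 1 * M₂ 0 0 * ν 0 + (-3 : ℝ) * M₁ 0 1 * M₂ 0 0 * ν 0 * ν 1 ^ 2 + (1 : ℝ) * M₁ 0 1 * M₂ 0 0 * ν 0 ^ 3 * ν 1 ^ 2 + (-1 : ℝ) * M₁ 0 0 * M₂ 2 2 * ν 1 +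 (3 : ℝ) * M₁ 0 0 * M₂ 2 2 * ν 1 ^ 3 + (1 : ℝ) * M₁ 0 0 * M₂ 2 2 * ν 0 ^ 2 * ν 1 * ν 2 ^ 2 + (1 : ℝ) * M₁ 0 0 * M₂ 2 1 * ν 2 + (-3 : ℝ) * M₁ 0 0 * M₂ 2 1 * ν 1 ^ 2 * ν 2 + (1 : ℝ) * M₁ 0 0 * M₂ 2 1 * ν 0 ^ 2 * ν 1 ^ 2 * ν 2 + (-3 : ℝ) * M₁ 0 0 * M₂ 2 0 * ν 0 * ν 1 * ν 2 + (1 : ℝ) * M₁ 0 0 * M₂ 2 0 * ν 0 ^ 3 * ν 1 * ν 2 + (-3 : ℝ) * M₁ 0 0 * M₂ 1 2 * ν 1 ^ 2 * ν 2 + (1 : ℝ) * M₁ 0 0 * M₂ 1 2 * ν 0 ^ 2 * ν 1 ^ 2 * ν 2 + (3 : ℝ) * M₁ 0 0 * M₂ 1 1 * ν 1 * ν 2 ^ 2 + (1 : ℝ) * M₁ 0 0 * M₂ 1 1 * ν 0 ^ 2 * ν 1 ^ 3 + (-3 : ℝ) * M₁ 0 0 * M₂ 1 0 * ν 0 * ν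 1 ^ 2 + (1 : ℝ) * M₁ 0 0 * M₂ 1 0 * ν 0 ^ 3 * ν 1 ^ 2 + (-3 : ℝ) * M₁ 0 0 * M₂ 0 2 * ν 0 * ν 1 * ν 2 + (1 : ℝ) * M₁ 0 0 * M₂ 0 2 * ν 0 ^ 3 * ν 1 * ν 2 + (1 : ℝ) * M₁ 0 0 * M₂ 0 1 * ν 0 + (-3 : ℝ) * M₁ 0 0 * M₂ 0 1 * ν 0 * ν 1 ^ 2 + (1 : ℝ) * M₁ 0 0 * M₂ 0 1 * ν 0 ^ 3 * ν 1 ^ 2 + (3 : ℝ) * M₁ 0 0 * M₂ 0 0 * ν 1 * ν 2 ^ 2 + (3 : ℝ) * M₁ 0 0 * M₂ 0 0 * ν 1 ^ 3 + (-3 : ℝ) * M₁ 0 0 * M₂ 0 0 * ν 0 ^ 2 * ν 1 + (1 : ℝ) * M₁ 0 0 * M₂ 0 0 * ν 0 ^ 4 * ν 1) * hν'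
  · simp [bbv, ccv, Matrix.mulVec_transpose, Matrix.vecMul, Matrix.adjugate_fin_three,
      Matrix.trace_fin_three, Matrix.mulVec, Matrix.vecMulVec_apply, Matrix.mul_apply,
      Matrix.sub_apply, Matrix.one_apply, Matrix.add_apply, Matrix.transpose_apply,
      dotProduct, Fin.sum_univ_three, Matrix.vecHead, Matrix.vecTail, Function.comp]
    linear_combination ((2 : ℝ) * M₁ 2 2 * M₂ 2 2 * ν 2 + (-3 : ℝ) * M₁ 2 2 * M₂ 2 2 * ν 2 ^ 3 + (1 : ℝ) * M₁ 2 2 * M₂ 2 2 * ν 2 ^ 5 + (3 : ℝ) * M₁ 2 2 * M₂ 2 2 * ν 1 ^ 2 * ν 2 + (3 : ℝ) * M₁ 2 2 * M₂ 2 2 * ν 0 ^ 2 * ν 2 + (-3 : ℝ) * M₁ 2 2 * M₂ 2 1 * ν 1 * ν 2 ^ 2 + (1 : ℝ) * M₁ 2 2 * M₂ 2 1 * ν 1 * ν 2 ^ 4 + (-3 : ℝ) * M₁ 2 2 * M₂ 2 0 * ν 0 * ν 2 ^ 2 + (1 : ℝ) * M₁ 2 2 * M₂ 2 0 * ν 0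 * ν 2 ^ 4 + (1 : ℝ) * M₁ 2 2 * M₂ 1 2 * ν 1 + (-3 : ℝ) * M₁ 2 2 * M₂ 1 2 * ν 1 * ν 2 ^ 2 + (1 : ℝ) * M₁ 2 2 * M₂ 1 2 * ν 1 * ν 2 ^ 4 + (1 : ℝ) * M₁ 2 2 * M₂ 1 1 * ν 1 ^ 2 * ν 2 ^ 3 + (3 : ℝ) * M₁ 2 2 * M₂ 1 1 * ν 0 ^ 2 * ν 2 + (-3 : ℝ) * M₁ 2 2 * M₂ 1 0 * ν 0 * ν 1 * ν 2 + (1 : ℝ) * M₁ 2 2 * M₂ 1 0 * ν 0 * ν 1 * ν 2 ^ 3 + (1 : ℝ) * M₁ 2 2 * M₂ 0 2 * ν 0 + (-3 : ℝ) * M₁ 2 2 * M₂ 0 2 * ν 0 * ν 2 ^ 2 + (1 : ℝ) * M₁ 2 2 * M₂ 0 2 * ν 0 * ν 2 ^ 4 + (-3 : ℝ) * M₁ 2 2 * M₂ 0 1 * ν 0 * ν 1 * ν 2 + (1 : ℝ) * M₁ 2 2 * M₂ 0 1 * ν 0 * ν 1 * ν 2 ^ 3 + (3 : ℝ) * M₁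 2 2 * M₂ 0 0 * ν 1 ^ 2 * ν 2 + (1 : ℝ) * M₁ 2 2 * M₂ 0 0 * ν 0 ^ 2 * ν 2 ^ 3 + (-3 : ℝ) * M₁ 2 1 * M₂ 2 2 * ν 1 * ν 2 ^ 2 + (1 : ℝ) * M₁ 2 1 * M₂ 2 2 * ν 1 * ν 2 ^ 4 + (1 : ℝ) * M₁ 2 1 * M₂ 2 1 * ν 1 ^ 2 * ν 2 ^ 3 + (1 : ℝ) * M₁ 2 1 * M₂ 2 0 * ν 0 * ν 1 * ν 2 ^ 3 + (1 : ℝ) * M₁ 2 1 * M₂ 1 2 * ν 2 + (1 : ℝ) * M₁ 2 1 * M₂ 1 2 * ν 1 ^ 2 * ν 2 ^ 3 + (-3 : ℝ) * M₁ 2 1 * M₂ 1 1 * ν 1 * ν 2 ^ 2 + (1 : ℝ) * M₁ 2 1 * M₂ 1 1 * ν 1 ^ 3 * ν 2 ^ 2 + (1 : ℝ) * M₁ 2 1 * M₂ 1 0 * ν 0 * ν 1 ^ 2 * ν 2 ^ 2 + (1 : ℝ) * M₁ 2 1 * M₂ 0 2 * ν 0 * ν 1 * ν 2 ^ 3 +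 (1 : ℝ) * M₁ 2 1 * M₂ 0 1 * ν 0 * ν 1 ^ 2 * ν 2 ^ 2 + (-3 : ℝ) * M₁ 2 1 * M₂ 0 0 * ν 1 * ν 2 ^ 2 + (1 : ℝ) * M₁ 2 1 * M₂ 0 0 * ν 0 ^ 2 * ν 1 * ν 2 ^ 2 + (-3 : ℝ) * M₁ 2 0 * M₂ 2 2 * ν 0 * ν 2 ^ 2 + (1 : ℝ) * M₁ 2 0 * M₂ 2 2 * ν 0 * ν 2 ^ 4 + (1 : ℝ) * M₁ 2 0 * M₂ 2 1 * ν 0 * ν 1 * ν 2 ^ 3 + (1 : ℝ) * M₁ 2 0 * M₂ 2 0 * ν 0 ^ 2 * ν 2 ^ 3 + (1 : ℝ) * M₁ 2 0 * M₂ 1 2 * ν 0 * ν 1 * ν 2 ^ 3 + (-3 : ℝ) * M₁ 2 0 * M₂ 1 1 * ν 0 * ν 2 ^ 2 + (1 : ℝ) * M₁ 2 0 * M₂ 1 1 * ν 0 * ν 1 ^ 2 * ν 2 ^ 2 + (1 : ℝ) * M₁ 2 0 * M₂ 1 0 * ν 0 ^ 2 * ν 1 * ν 2 ^ 2 + (1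 : ℝ) * M₁ 2 0 * M₂ 0 2 * ν 2 + (1 : ℝ) * M₁ 2 0 * M₂ 0 2 * ν 0 ^ 2 * ν 2 ^ 3 + (1 : ℝ) * M₁ 2 0 * M₂ 0 1 * ν 0 ^ 2 * ν 1 * ν 2 ^ 2 + (-3 : ℝ) * M₁ 2 0 * M₂ 0 0 * ν 0 * ν 2 ^ 2 + (1 : ℝ) * M₁ 2 0 * M₂ 0 0 * ν 0 ^ 3 * ν 2 ^ 2 + (1 : ℝ) * M₁ 1 2 * M₂ 2 2 * ν 1 + (-3 : ℝ) * M₁ 1 2 * M₂ 2 2 * ν 1 * ν 2 ^ 2 + (1 : ℝ) * M₁ 1 2 * M₂ 2 2 * ν 1 * ν 2 ^ 4 + (1 : ℝ) * M₁ 1 2 * M₂ 2 1 * ν 2 + (1 : ℝ) * M₁ 1 2 * M₂ 2 1 * ν 1 ^ 2 * ν 2 ^ 3 + (1 : ℝ) * M₁ 1 2 * M₂ 2 0 * ν 0 * ν 1 * ν 2 ^ 3 + (1 : ℝ) * M₁ 1 2 * M₂ 1 2 * ν 1 ^ 2 * ν 2 ^ 3 + (1 : ℝ) * M₁ 1 2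 * M₂ 1 1 * ν 1 + (-3 : ℝ) * M₁ 1 2 * M₂ 1 1 * ν 1 * ν 2 ^ 2 + (1 : ℝ) * M₁ 1 2 * M₂ 1 1 * ν 1 ^ 3 * ν 2 ^ 2 + (1 : ℝ) * M₁ 1 2 * M₂ 1 0 * ν 0 * ν 1 ^ 2 * ν 2 ^ 2 + (1 : ℝ) * M₁ 1 2 * M₂ 0 2 * ν 0 * ν 1 * ν 2 ^ 3 + (1 : ℝ) * M₁ 1 2 * M₂ 0 1 * ν 0 * ν 1 ^ 2 * ν 2 ^ 2 + (1 : ℝ) * M₁ 1 2 * M₂ 0 0 * ν 1 + (-3 : ℝ) * M₁ 1 2 * M₂ 0 0 * ν 1 * ν 2 ^ 2 + (1 : ℝ) * M₁ 1 2 * M₂ 0 0 * ν 0 ^ 2 * ν 1 * ν 2 ^ 2 + (1 : ℝ) * M₁ 1 1 * M₂ 2 2 * ν 1 ^ 2 * ν 2 ^ 3 + (3 : ℝ) * M₁ 1 1 * M₂ 2 2 * ν 0 ^ 2 * ν 2 + (-3 : ℝ) * M₁ 1 1 * M₂ 2 1 * ν 1 * ν 2 ^ 2 + (1 : ℝ)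 * M₁ 1 1 * M₂ 2 1 * ν 1 ^ 3 * ν 2 ^ 2 + (-3 : ℝ) * M₁ 1 1 * M₂ 2 0 * ν 0 * ν 2 ^ 2 + (1 : ℝ) * M₁ 1 1 * M₂ 2 0 * ν 0 * ν 1 ^ 2 * ν 2 ^ 2 + (1 : ℝ) * M₁ 1 1 * M₂ 1 2 * ν 1 + (-3 : ℝ) * M₁ 1 1 * M₂ 1 2 * ν 1 * ν 2 ^ 2 + (1 : ℝ) * M₁ 1 1 * M₂ 1 2 * ν 1 ^ 3 * ν 2 ^ 2 + (3 : ℝ) * M₁ 1 1 * M₂ 1 1 * ν 2 ^ 3 + (-3 : ℝ) * M₁ 1 1 * M₂ 1 1 * ν 1 ^ 2 * ν 2 + (1 : ℝ) * M₁ 1 1 * M₂ 1 1 * ν 1 ^ 4 * ν 2 + (3 : ℝ) * M₁ 1 1 * M₂ 1 1 * ν 0 ^ 2 * ν 2 + (-3 : ℝ) * M₁ 1 1 * M₂ 1 0 * ν 0 * ν 1 * ν 2 + (1 : ℝ) * M₁ 1 1 * M₂ 1 0 * ν 0 * ν 1 ^ 3 * ν 2 + (1 : ℝ) * M₁ 1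 1 * M₂ 0 2 * ν 0 + (-3 : ℝ) * M₁ 1 1 * M₂ 0 2 * ν 0 * ν 2 ^ 2 + (1 : ℝ) * M₁ 1 1 * M₂ 0 2 * ν 0 * ν 1 ^ 2 * ν 2 ^ 2 + (-3 : ℝ) * M₁ 1 1 * M₂ 0 1 * ν 0 * ν 1 * ν 2 + (1 : ℝ) * M₁ 1 1 * M₂ 0 1 * ν 0 * ν 1 ^ 3 * ν 2 + (-1 : ℝ) * M₁ 1 1 * M₂ 0 0 * ν 2 + (3 : ℝ) * M₁ 1 1 * M₂ 0 0 * ν 2 ^ 3 + (1 : ℝ) * M₁ 1 1 * M₂ 0 0 * ν 0 ^ 2 * ν 1 ^ 2 * ν 2 + (-3 : ℝ) * M₁ 1 0 * M₂ 2 2 * ν 0 * ν 1 * ν 2 + (1 : ℝ) * M₁ 1 0 * M₂ 2 2 * ν 0 * ν 1 * ν 2 ^ 3 + (1 : ℝ) * M₁ 1 0 * M₂ 2 1 * ν 0 * ν 1 ^ 2 * ν 2 ^ 2 + (1 : ℝ) * M₁ 1 0 * M₂ 2 0 * ν 0 ^ 2 * ν 1 * ν 2 ^ 2 + (1 : ℝ)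 * M₁ 1 0 * M₂ 1 2 * ν 0 * ν 1 ^ 2 * ν 2 ^ 2 + (-3 : ℝ) * M₁ 1 0 * M₂ 1 1 * ν 0 * ν 1 * ν 2 + (1 : ℝ) * M₁ 1 0 * M₂ 1 1 * ν 0 * ν 1 ^ 3 * ν 2 + (1 : ℝ) * M₁ 1 0 * M₂ 1 0 * ν 0 ^ 2 * ν 1 ^ 2 * ν 2 + (1 : ℝ) * M₁ 1 0 * M₂ 0 2 * ν 0 ^ 2 * ν 1 * ν 2 ^ 2 + (1 : ℝ) * M₁ 1 0 * M₂ 0 1 * ν 2 + (1 : ℝ) * M₁ 1 0 * M₂ 0 1 * ν 0 ^ 2 * ν 1 ^ 2 * ν 2 + (-3 : ℝ) * M₁ 1 0 * M₂ 0 0 * ν 0 * ν 1 * ν 2 + (1 : ℝ) * M₁ 1 0 * M₂ 0 0 * ν 0 ^ 3 * ν 1 * ν 2 + (1 : ℝ) * M₁ 0 2 * M₂ 2 2 * ν 0 + (-3 : ℝ) * M₁ 0 2 * M₂ 2 2 * ν 0 * ν 2 ^ 2 + (1 : ℝ) * M₁ 0 2 * M₂ 2 2 * ν 0 * ν 2 ^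 4 + (1 : ℝ) * M₁ 0 2 * M₂ 2 1 * ν 0 * ν 1 * ν 2 ^ 3 + (1 : ℝ) * M₁ 0 2 * M₂ 2 0 * ν 2 + (1 : ℝ) * M₁ 0 2 * M₂ 2 0 * ν 0 ^ 2 * ν 2 ^ 3 + (1 : ℝ) * M₁ 0 2 * M₂ 1 2 * ν 0 * ν 1 * ν 2 ^ 3 + (1 : ℝ) * M₁ 0 2 * M₂ 1 1 * ν 0 + (-3 : ℝ) * M₁ 0 2 * M₂ 1 1 * ν 0 * ν 2 ^ 2 + (1 : ℝ) * M₁ 0 2 * M₂ 1 1 * ν 0 * ν 1 ^ 2 * ν 2 ^ 2 + (1 : ℝ) * M₁ 0 2 * M₂ 1 0 * ν 0 ^ 2 * ν 1 * ν 2 ^ 2 + (1 : ℝ) * M₁ 0 2 * M₂ 0 2 * ν 0 ^ 2 * ν 2 ^ 3 + (1 : ℝ) * M₁ 0 2 * M₂ 0 1 * ν 0 ^ 2 * ν 1 * ν 2 ^ 2 + (1 : ℝ) * M₁ 0 2 * M₂ 0 0 * ν 0 + (-3 : ℝ) * M₁ 0 2 * M₂ 0 0 * ν 0 * ν 2 ^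 2 + (1 : ℝ) * M₁ 0 2 * M₂ 0 0 * ν 0 ^ 3 * ν 2 ^ 2 + (-3 : ℝ) * M₁ 0 1 * M₂ 2 2 * ν 0 * ν 1 * ν 2 + (1 : ℝ) * M₁ 0 1 * M₂ 2 2 * ν 0 * ν 1 * ν 2 ^ 3 + (1 : ℝ) * M₁ 0 1 * M₂ 2 1 * ν 0 * ν 1 ^ 2 * ν 2 ^ 2 + (1 : ℝ) * M₁ 0 1 * M₂ 2 0 * ν 0 ^ 2 * ν 1 * ν 2 ^ 2 + (1 : ℝ) * M₁ 0 1 * M₂ 1 2 * ν 0 * ν 1 ^ 2 * ν 2 ^ 2 + (-3 : ℝ) * M₁ 0 1 * M₂ 1 1 * ν 0 * ν 1 * ν 2 + (1 : ℝ) * M₁ 0 1 * M₂ 1 1 * ν 0 * ν 1 ^ 3 * ν 2 + (1 : ℝ) * M₁ 0 1 * M₂ 1 0 * ν 2 + (1 : ℝ) * M₁ 0 1 * M₂ 1 0 * ν 0 ^ 2 * ν 1 ^ 2 * ν 2 + (1 : ℝ) * M₁ 0 1 * M₂ 0 2 * ν 0 ^ 2 * ν 1 * ν 2 ^ 2 +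 (1 : ℝ) * M₁ 0 1 * M₂ 0 1 * ν 0 ^ 2 * ν 1 ^ 2 * ν 2 + (-3 : ℝ) * M₁ 0 1 * M₂ 0 0 * ν 0 * ν 1 * ν 2 + (1 : ℝ) * M₁ 0 1 * M₂ 0 0 * ν 0 ^ 3 * ν 1 * ν 2 + (3 : ℝ) * M₁ 0 0 * M₂ 2 2 * ν 1 ^ 2 * ν 2 + (1 : ℝ) * M₁ 0 0 * M₂ 2 2 * ν 0 ^ 2 * ν 2 ^ 3 + (-3 : ℝ) * M₁ 0 0 * M₂ 2 1 * ν 1 * ν 2 ^ 2 + (1 : ℝ) * M₁ 0 0 * M₂ 2 1 * ν 0 ^ 2 * ν 1 * ν 2 ^ 2 + (-3 : ℝ) * M₁ 0 0 * M₂ 2 0 * ν 0 * ν 2 ^ 2 + (1 : ℝ) * M₁ 0 0 * M₂ 2 0 * ν 0 ^ 3 * ν 2 ^ 2 + (1 : ℝ) * M₁ 0 0 * M₂ 1 2 * ν 1 + (-3 : ℝ) * M₁ 0 0 * M₂ 1 2 * ν 1 * ν 2 ^ 2 + (1 : ℝ) * M₁ 0 0 * M₂ 1 2 * ν 0 ^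 2 * ν 1 * ν 2 ^ 2 + (-1 : ℝ) * M₁ 0 0 * M₂ 1 1 * ν 2 + (3 : ℝ) * M₁ 0 0 * M₂ 1 1 * ν 2 ^ 3 + (1 : ℝ) * M₁ 0 0 * M₂ 1 1 * ν 0 ^ 2 * ν 1 ^ 2 * ν 2 + (-3 : ℝ) * M₁ 0 0 * M₂ 1 0 * ν 0 * ν 1 * ν 2 + (1 : ℝ) * M₁ 0 0 * M₂ 1 0 * ν 0 ^ 3 * ν 1 * ν 2 + (1 : ℝ) * M₁ 0 0 * M₂ 0 2 * ν 0 + (-3 : ℝ) * M₁ 0 0 * M₂ 0 2 * ν 0 * ν 2 ^ 2 + (1 : ℝ) * M₁ 0 0 * M₂ 0 2 * ν 0 ^ 3 * ν 2 ^ 2 + (-3 : ℝ) * M₁ 0 0 * M₂ 0 1 * ν 0 * ν 1 * ν 2 + (1 : ℝ) * M₁ 0 0 * M₂ 0 1 * ν 0 ^ 3 * ν 1 * ν 2 + (3 : ℝ) * M₁ 0 0 * M₂ 0 0 * ν 2 ^ 3 + (3 : ℝ) * M₁ 0 0 * M₂ 0 0 * ν 1 ^ 2 * ν 2 + (-3 :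 ℝ) * M₁ 0 0 * M₂ 0 0 * ν 0 ^ 2 * ν 2 + (1 : ℝ) * M₁ 0 0 * M₂ 0 0 * ν 0 ^ 4 * ν 2) * hν'
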